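/- Assume α ∈ [1,5/4), G(−v) = −G(v) and G(v)·v ≥ G*|v|^{2α} for all v ∈ ℝ^d with G* > 0, Φ(|x|) ≥ Φ* > 0 and |F(|x|²)x| ≤ F* for all x ∈ ℝ^d, with F* < 2^{α−1/2} Φ* G*. Let (f_t)_{t∈[0,∞)} be a global weak solution of the kinetic flocking equation with compactly supported measures, set 𝒱₀ = ∫ v f₀(dx,dv), and let ν_t be the pushforward of f_t under the map (x,v) ↦ (x, 𝒱₀). Then for every t ≥ 0 and every function φ : ℝ^{2d} → ℝ with sup|φ| ≤ 1 and Lipschitz constant ≤ 1, one has |∫ φ df_t − ∫ φ dν_t| ≤ ∫ |v − 𝒱₀| f_t(dx,dv) ≤ (𝒢[f_t])^{1/2}; consequently the bounded Lipschitz distance d(f_t, ν_t) := sup over such φ of |∫ φ df_t − ∫ φ dν_t| tends to 0 as t → ∞. -/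

import Mathlib

open MeasureTheory Filter
open scoped RealInnerProductSpace BigOperators ENNReal

noncomputable section

abbrev Euc (d : ℕ) := EuclideanSpace ℝ (Fin d)

abbrev Phase (d : ℕ) := Euc d × Euc d

/-- Euclidean norm on the phase space ℝ^d × ℝ^d ≅ ℝ^{2d}. -/
noncomputable def pnorm {d : ℕ} (z : Phase d) : ℝ :=
  Real.sqrt (‖z.1‖ ^ 2 + ‖z.2‖ ^ 2)

/-- Closed ball of radius `R` (Euclidean norm) in the phase space ℝ^{2d}. -/
def pball (d : ℕ) (R : ℝ) : Set (Phase d) := {z | pnorm z ≤ R}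

/-- Velocity fluctuation 𝒢[f]. -/
noncomputable def velFluc {d : ℕ} (f : Measure (Phase d)) : ℝ :=
  (∫ z, ‖z.2‖ ^ 2 ∂f) - ‖∫ z, z.2 ∂f‖ ^ 2

/-- Position fluctuation Γ[f]. -/
noncomputable def posFluc {d : ℕ} (f : Measure (Phase d)) : ℝ :=
  (∫ z, ‖z.1‖ ^ 2 ∂f) - ‖∫ z, z.1 ∂f‖ ^ 2

/-- Interaction field H_[f]. -/
noncomputable def Hfield {d : ℕ} (Φ : ℝ → ℝ) (G : Euc d → Euc d) (F : ℝ → ℝ) (α : ℝ)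
    (f : Measure (Phase d)) (x v : Euc d) : Euc d :=
  - (∫ z, Φ ‖x - z.1‖ • G (v - z.2) ∂f)
    + velFluc f ^ ((2 * α - 1) / 2) • ∫ z, F (‖x - z.1‖ ^ 2) • (x - z.1) ∂f

/-- A family of compactly supported Borel probability measures is a weak solution of the
kinetic flocking equation on the time set `I` if for every `C¹` test function `φ` the map
`t ↦ ∫ φ d f_t` is differentiable (within `I`) with the stated derivative. -/
def IsWeakSolution {d : ℕ} (Φ : ℝ → ℝ) (G : Euc d → Euc d) (F : ℝ → ℝ) (α : ℝ)
    (I : Set ℝ) (f : ℝ → Measure (Phase d)) : Prop :=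
  (∀ t ∈ I, IsProbabilityMeasure (f t) ∧ ∃ K : Set (Phase d), IsCompact K ∧ f t Kᶜ = 0) ∧
  ∀ φ : Phase d → ℝ, ContDiff ℝ 1 φ → ∀ t ∈ I,
    HasDerivWithinAt (fun s => ∫ z, φ z ∂(f s))
      (∫ z, fderiv ℝ φ z (z.2, Hfield Φ G F α (f t) z.1 z.2) ∂(f t)) I t

/-- Measure-valued solution of the kinetic flocking equation on a time set `I ∋ 0`,
given by a family of compactly supported probability measures together with a flow map `𝒯`. -/
def IsMVSolution {d : ℕ} (Φ : ℝ → ℝ) (G : Euc d → Euc d) (F : ℝ → ℝ) (α : ℝ)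
    (I : Set ℝ) (f₀ : Measure (Phase d)) (f : ℝ → Measure (Phase d))
    (T : ℝ → Phase d → Phase d) : Prop :=
  (0 : ℝ) ∈ I ∧
  ContinuousOn (fun p : ℝ × Phase d => T p.1 p.2) (I ×ˢ Set.univ) ∧
  T 0 = id ∧
  (∀ t ∈ I, IsProbabilityMeasure (f t) ∧ ∃ K : Set (Phase d), IsCompact K ∧ f t Kᶜ = 0) ∧
  (∀ z₀ : Phase d, ∀ t ∈ I,
    HasDerivWithinAt (fun s => T s z₀)
      ((T t z₀).2, Hfield Φ G F α (f t) (T t z₀).1 (T t z₀).2) I t) ∧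
  (∀ t ∈ I, f t = f₀.map (T t))

/-- `π` is a coupling of `f` and `g`. -/
def IsCoupling {d : ℕ} (π : Measure (Phase d × Phase d)) (f g : Measure (Phase d)) : Prop :=
  π.map Prod.fst = f ∧ π.map Prod.snd = g

/-- The Monge–Kantorovich–Rubinstein distance W₁ (with the Euclidean cost on ℝ^{2d}). -/
noncomputable def W1 {d : ℕ} (f g : Measure (Phase d)) : ℝ :=
  sInf {c : ℝ | ∃ π : Measure (Phase d × Phase d), IsProbabilityMeasure π ∧ IsCoupling π f g ∧
    Integrable (fun p => pnorm (p.1 - p.2)) π ∧ c = ∫ p, pnorm (p.1 - p.2) ∂π}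

end


noncomputable section

instance {d : ℕ} : BorelSpace (Phase d × Phase d) := Prod.borelSpace

section Helpers

variable {X F : Type*} [MeasurableSpace X] [TopologicalSpace X]
    [OpensMeasurableSpace X] [SecondCountableTopology X] [NormedAddCommGroup F]

lemma integrable_of_compact_null {μ : Measure X} [IsFiniteMeasure μ]
    {K : Set X} (hK : IsCompact K) (h0 : μ Kᶜ = 0) {g : X → F} (hg : Continuous g) :
    Integrable g μ := by
  obtain ⟨C, hC⟩ := hK.exists_bound_of_continuousOn hg.continuousOn
  refine Integrable.mono' (integrable_const C) hg.aestronglyMeasurable ?_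
  have : ∀ᵐ x ∂μ, x ∈ K := by
    have := ae_iff.mpr (by simpa [Set.compl_def] using h0 : μ {x | ¬ x ∈ K} = 0)
    exact this
  filter_upwards [this] with x hx using hC x hx

omit [TopologicalSpace X] [OpensMeasurableSpace X] [SecondCountableTopology X] in
lemma prod_compl_null {μ : Measure X} [SFinite μ] {K : Set X} (h0 : μ Kᶜ = 0) :
    (μ.prod μ) (K ×ˢ K)ᶜ = 0 := by
  have h : (K ×ˢ K)ᶜ ⊆ (Kᶜ ×ˢ Set.univ) ∪ (Set.univ ×ˢ Kᶜ) := by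
    intro p hp
    simp only [Set.mem_compl_iff, Set.mem_prod, not_and_or] at hp
    rcases hp with h | h
    · exact Or.inl ⟨h, trivial⟩
    · exact Or.inr ⟨trivial, h⟩
  refine measure_mono_null h (measure_union_null ?_ ?_)
  · rw [Measure.prod_prod, h0, zero_mul]
  · rw [Measure.prod_prod, h0, mul_zero]

end Helpers

section Jensen

variable {X : Type*} [MeasurableSpace X]

lemma sq_integral_le {μ : Measure X} [IsProbabilityMeasure μ] {g : X → ℝ}
    (hgi : Integrable g μ) (hg2i : Integrable (fun x => g x ^ 2) μ) :
    (∫ x, g x ∂μ) ^ 2 ≤ ∫ x, g x ^ 2 ∂μ := by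
  set m := ∫ x, g x ∂μ with hm
  have h0 : 0 ≤ ∫ x, (g x - m) ^ 2 ∂μ := integral_nonneg fun x => sq_nonneg _
  have hexp : ∫ x, (g x - m) ^ 2 ∂μ = (∫ x, g x ^ 2 ∂μ) - m ^ 2 := by
    have h1 : ∀ x, (g x - m) ^ 2 = g x ^ 2 - (2 * m) * g x + m ^ 2 := by intro x; ring
    simp_rw [h1]
    have hsub : Integrable (fun x => g x ^ 2 - 2 * m * g x) μ := hg2i.sub (hgi.const_mul (2*m))
    rw [integral_add hsub (integrable_const _),
      integral_sub hg2i (hgi.const_mul (2*m)), MeasureTheory.integral_const_mul, integral_const]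
    simp only [measureReal_def, measure_univ, ENNReal.toReal_one, smul_eq_mul, one_mul, ← hm]
    ring
  linarith

lemma integral_le_sqrt_integral_sq {μ : Measure X} [IsProbabilityMeasure μ] {g : X → ℝ}
    (hgi : Integrable g μ) (hg2i : Integrable (fun x => g x ^ 2) μ) :
    ∫ x, g x ∂μ ≤ Real.sqrt (∫ x, g x ^ 2 ∂μ) := by
  have h := sq_integral_le hgi hg2i
  have h2 := Real.sqrt_le_sqrt h
  calc ∫ x, g x ∂μ ≤ |∫ x, g x ∂μ| := le_abs_self _
    _ = Real.sqrt ((∫ x, g x ∂μ) ^ 2) := (Real.sqrt_sq_eq_abs _).symm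
    _ ≤ _ := h2

lemma jensen_rpow {μ : Measure X} [IsProbabilityMeasure μ] {g : X → ℝ} {α : ℝ}
    (hα : 1 ≤ α) (hg0 : ∀ x, 0 ≤ g x) (hgi : Integrable g μ)
    (hgpi : Integrable (fun x => g x ^ α) μ) :
    (∫ x, g x ∂μ) ^ α ≤ ∫ x, g x ^ α ∂μ := by
  have hcont : ContinuousOn (fun x : ℝ => x ^ α) (Set.Ici 0) :=
    (continuous_id.rpow_const fun x => Or.inr (by linarith)).continuousOn
  have := (convexOn_rpow hα).map_average_le hcont isClosed_Ici
    (Filter.Eventually.of_forall fun x => hg0 x) hgi (by exact hgpi)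
  simpa [average_eq_integral] using this

end Jensen

section Swap

variable {d : ℕ}

lemma integral_swap_eq (μ : Measure (Phase d)) [SFinite μ] {k : Phase d × Phase d → ℝ}
    (hk : AEStronglyMeasurable k (μ.prod μ)) :
    ∫ p, k p.swap ∂(μ.prod μ) = ∫ p, k p ∂(μ.prod μ) := by
  conv_rhs => rw [← Measure.prod_swap]
  rw [integral_map measurable_swap.aemeasurable]
  rwa [Measure.prod_swap]

/-- An antisymmetric kernel integrates to zero against a product measure. -/
lemma integral_antisymm_zero (μ : Measure (Phase d)) [SFinite μ] {k : Phase d × Phase d → ℝ}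
    (hkc : Continuous k) (hanti : ∀ p, k p.swap = - k p) :
    ∫ p, k p ∂(μ.prod μ) = 0 := by
  have h := integral_swap_eq μ hkc.aestronglyMeasurable
  simp_rw [hanti, integral_neg] at h
  linarith

end Swap


section Fluc

variable {d : ℕ}

lemma integral_dev_sq (μ : Measure (Phase d)) [IsProbabilityMeasure μ]
    {K : Set (Phase d)} (hK : IsCompact K) (h0 : μ Kᶜ = 0) (W : Euc d) :
    ∫ z, ‖z.2 - W‖ ^ 2 ∂μ
      = (∫ z, ‖z.2‖ ^ 2 ∂μ) - 2 * ⟪(∫ z, z.2 ∂μ), W⟫ + ‖W‖ ^ 2 := by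
  have hiv : Integrable (fun z : Phase d => z.2) μ :=
    integrable_of_compact_null hK h0 continuous_snd
  have hivsq : Integrable (fun z : Phase d => ‖z.2‖ ^ 2) μ :=
    integrable_of_compact_null hK h0 (continuous_snd.norm.pow 2)
  have hiin : Integrable (fun z : Phase d => 2 * ⟪W, z.2⟫) μ :=
    (integrable_of_compact_null hK h0 (continuous_const.inner continuous_snd)).const_mul 2
  have h1 : ∀ z : Phase d, ‖z.2 - W‖ ^ 2 = ‖z.2‖ ^ 2 - 2 * ⟪W, z.2⟫ + ‖W‖ ^ 2 := by
    intro z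
    rw [norm_sub_sq_real, real_inner_comm]
  simp_rw [h1]
  have hsub : Integrable (fun z : Phase d => ‖z.2‖ ^ 2 - 2 * ⟪W, z.2⟫) μ := hivsq.sub hiin
  rw [integral_add hsub (integrable_const _), integral_sub hivsq hiin, integral_const]
  have h2 : ∫ z : Phase d, 2 * ⟪W, z.2⟫ ∂μ = 2 * ⟪W, ∫ z : Phase d, z.2 ∂μ⟫ := by
    rw [MeasureTheory.integral_const_mul, integral_inner hiv]
  rw [h2, real_inner_comm]
  simp [measure_univ]

lemma velFluc_eq_dev (μ : Measure (Phase d)) [IsProbabilityMeasure μ]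
    {K : Set (Phase d)} (hK : IsCompact K) (h0 : μ Kᶜ = 0) :
    velFluc μ = ∫ z, ‖z.2 - ∫ w, w.2 ∂μ‖ ^ 2 ∂μ := by
  rw [integral_dev_sq μ hK h0, velFluc, real_inner_self_eq_norm_sq]
  ring

lemma velFluc_nonneg (μ : Measure (Phase d)) [IsProbabilityMeasure μ]
    {K : Set (Phase d)} (hK : IsCompact K) (h0 : μ Kᶜ = 0) :
    0 ≤ velFluc μ := by
  rw [velFluc_eq_dev μ hK h0]
  exact integral_nonneg fun z => sq_nonneg _

end Fluc

section KeyBound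

variable {d : ℕ}

lemma double_integral_dev (μ : Measure (Phase d)) [IsProbabilityMeasure μ]
    {K : Set (Phase d)} (hK : IsCompact K) (h0 : μ Kᶜ = 0) :
    ∫ p, ‖p.1.2 - p.2.2‖ ^ 2 ∂(μ.prod μ) = 2 * velFluc μ := by
  have hK2 : IsCompact (K ×ˢ K) := hK.prod hK
  have h02 : (μ.prod μ) (K ×ˢ K)ᶜ = 0 := prod_compl_null h0
  have hiv : Integrable (fun z : Phase d => z.2) μ :=
    integrable_of_compact_null hK h0 continuous_snd
  have h1 : ∀ p : Phase d × Phase d,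
      ‖p.1.2 - p.2.2‖ ^ 2 = ‖p.1.2‖ ^ 2 - 2 * ⟪p.1.2, p.2.2⟫ + ‖p.2.2‖ ^ 2 :=
    fun p => norm_sub_sq_real _ _
  simp_rw [h1]
  have ia : Integrable (fun p : Phase d × Phase d => ‖p.1.2‖ ^ 2) (μ.prod μ) :=
    integrable_of_compact_null hK2 h02 ((continuous_fst.snd.norm.pow 2))
  have ib : Integrable (fun p : Phase d × Phase d => ‖p.2.2‖ ^ 2) (μ.prod μ) :=
    integrable_of_compact_null hK2 h02 ((continuous_snd.snd.norm.pow 2))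
  have ic : Integrable (fun p : Phase d × Phase d => 2 * ⟪p.1.2, p.2.2⟫) (μ.prod μ) :=
    (integrable_of_compact_null hK2 h02
      (continuous_fst.snd.inner continuous_snd.snd)).const_mul 2
  have hsub : Integrable (fun p : Phase d × Phase d => ‖p.1.2‖ ^ 2 - 2 * ⟪p.1.2, p.2.2⟫)
      (μ.prod μ) := ia.sub ic
  rw [integral_add hsub ib, integral_sub ia ic]
  have ha : ∫ p, ‖p.1.2‖ ^ 2 ∂(μ.prod μ) = ∫ z, ‖z.2‖ ^ 2 ∂μ := by
    rw [integral_prod _ ia]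
    simp [integral_const, measure_univ]
  have hb : ∫ p, ‖p.2.2‖ ^ 2 ∂(μ.prod μ) = ∫ z, ‖z.2‖ ^ 2 ∂μ := by
    rw [integral_prod _ ib]
    simp [integral_const, measure_univ]
  have hc : ∫ p, 2 * ⟪p.1.2, p.2.2⟫ ∂(μ.prod μ)
      = 2 * ‖∫ z, z.2 ∂μ‖ ^ 2 := by
    rw [MeasureTheory.integral_const_mul]
    have : ∫ p, ⟪p.1.2, p.2.2⟫ ∂(μ.prod μ) = ‖∫ z, z.2 ∂μ‖ ^ 2 := by
      rw [integral_prod _ (integrable_of_compact_null hK2 h02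
        (continuous_fst.snd.inner continuous_snd.snd))]
      have hinner : ∀ x : Phase d, ∫ y, ⟪x.2, y.2⟫ ∂μ = ⟪x.2, ∫ z, z.2 ∂μ⟫ :=
        fun x => integral_inner hiv x.2
      simp_rw [hinner]
      have hcomm : ∫ x : Phase d, ⟪x.2, ∫ z : Phase d, z.2 ∂μ⟫ ∂μ
          = ∫ x : Phase d, ⟪(∫ z : Phase d, z.2 ∂μ), x.2⟫ ∂μ :=
        integral_congr_ae (Filter.Eventually.of_forall fun x => real_inner_comm _ _)
      rw [hcomm, integral_inner hiv, real_inner_self_eq_norm_sq]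
    rw [this]
  rw [ha, hb, hc, velFluc]
  ring

end KeyBound
section KB
variable {d : ℕ}

lemma key_bound (Φ F : ℝ → ℝ) (G : Euc d → Euc d) (α : ℝ)
    (hΦc : Continuous Φ) (hGc : Continuous G) (hFc : Continuous F)
    (hα : 1 ≤ α) (Gs Φs Fs : ℝ) (hGs : 0 < Gs) (hΦs : 0 < Φs)
    (hGodd : ∀ v : Euc d, G (-v) = -G v)
    (hGcoer : ∀ v : Euc d, Gs * ‖v‖ ^ (2 * α) ≤ ⟪G v, v⟫)
    (hΦlow : ∀ x : Euc d, Φs ≤ Φ ‖x‖)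
    (hFbd : ∀ x : Euc d, ‖F (‖x‖ ^ 2) • x‖ ≤ Fs)
    (μ : Measure (Phase d)) [IsProbabilityMeasure μ]
    {K : Set (Phase d)} (hK : IsCompact K) (h0 : μ Kᶜ = 0) :
    ∫ z, ⟪z.2, Hfield Φ G F α μ z.1 z.2⟫ ∂μ
      ≤ -(((2:ℝ) ^ α * Φs * Gs - Real.sqrt 2 * Fs) / 2) * velFluc μ ^ α := by
  have hK2 : IsCompact (K ×ˢ K) := hK.prod hK
  have h02 : (μ.prod μ) (K ×ˢ K)ᶜ = 0 := prod_compl_null h0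
  have hFs0 : 0 ≤ Fs := le_trans (norm_nonneg _) (hFbd 0)
  set 𝒢 := velFluc μ with h𝒢def
  have h𝒢 : 0 ≤ 𝒢 := velFluc_nonneg μ hK h0
  set c := 𝒢 ^ ((2 * α - 1) / 2) with hcdef
  have hc : 0 ≤ c := Real.rpow_nonneg h𝒢 _
  set k1 : Phase d × Phase d → ℝ :=
    fun p => Φ ‖p.1.1 - p.2.1‖ * ⟪p.1.2, G (p.1.2 - p.2.2)⟫ with hk1def
  set k2 : Phase d × Phase d → ℝ :=
    fun p => F (‖p.1.1 - p.2.1‖ ^ 2) * ⟪p.1.2, p.1.1 - p.2.1⟫ with hk2def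
  have hk1c : Continuous k1 :=
    (hΦc.comp (continuous_fst.fst.sub continuous_snd.fst).norm).mul
      (continuous_fst.snd.inner (hGc.comp (continuous_fst.snd.sub continuous_snd.snd)))
  have hk2c : Continuous k2 :=
    (hFc.comp ((continuous_fst.fst.sub continuous_snd.fst).norm.pow 2)).mul
      (continuous_fst.snd.inner (continuous_fst.fst.sub continuous_snd.fst))
  have hk1i : Integrable k1 (μ.prod μ) := integrable_of_compact_null hK2 h02 hk1c
  have hk2i : Integrable k2 (μ.prod μ) := integrable_of_compact_null hK2 h02 hk2c
  have hk1si : Integrable (fun p => k1 p.swap) (μ.prod μ) :=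
    integrable_of_compact_null hK2 h02 (hk1c.comp continuous_swap)
  have hk2si : Integrable (fun p => k2 p.swap) (μ.prod μ) :=
    integrable_of_compact_null hK2 h02 (hk2c.comp continuous_swap)
  -- Step 1: the integral of ⟪v, H⟫ as a double integral
  have step1 : ∫ z, ⟪z.2, Hfield Φ G F α μ z.1 z.2⟫ ∂μ
      = -(∫ p, k1 p ∂(μ.prod μ)) + c * ∫ p, k2 p ∂(μ.prod μ) := by
    have hpt : ∀ z : Phase d, ⟪z.2, Hfield Φ G F α μ z.1 z.2⟫
        = -(∫ z', k1 (z, z') ∂μ) + c * ∫ z', k2 (z, z') ∂μ := by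
      intro z
      have hAi : Integrable (fun z' : Phase d => Φ ‖z.1 - z'.1‖ • G (z.2 - z'.2)) μ :=
        integrable_of_compact_null hK h0
          ((hΦc.comp (continuous_const.sub continuous_fst).norm).smul
            (hGc.comp (continuous_const.sub continuous_snd)))
      have hBi : Integrable (fun z' : Phase d => F (‖z.1 - z'.1‖ ^ 2) • (z.1 - z'.1)) μ :=
        integrable_of_compact_null hK h0
          ((hFc.comp ((continuous_const.sub continuous_fst).norm.pow 2)).smul
            (continuous_const.sub continuous_fst))
      rw [Hfield, inner_add_right, inner_neg_right, real_inner_smul_right]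
      rw [← integral_inner hAi, ← integral_inner hBi]
      have e1 : ∀ z' : Phase d, ⟪z.2, Φ ‖z.1 - z'.1‖ • G (z.2 - z'.2)⟫ = k1 (z, z') := by
        intro z'; rw [real_inner_smul_right]
      have e2 : ∀ z' : Phase d, ⟪z.2, F (‖z.1 - z'.1‖ ^ 2) • (z.1 - z'.1)⟫ = k2 (z, z') := by
        intro z'; rw [real_inner_smul_right]
      simp_rw [e1, e2]
      rfl
    simp_rw [hpt]
    have hi1 : Integrable (fun z : Phase d => ∫ z', k1 (z, z') ∂μ) μ :=
      hk1i.integral_prod_left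
    have hi2 : Integrable (fun z : Phase d => ∫ z', k2 (z, z') ∂μ) μ :=
      hk2i.integral_prod_left
    have hi1' : Integrable (fun z : Phase d => -(∫ z', k1 (z, z') ∂μ)) μ := hi1.neg
    have hi2' : Integrable (fun z : Phase d => c * ∫ z', k2 (z, z') ∂μ) μ := hi2.const_mul c
    rw [integral_add hi1' hi2', integral_neg, MeasureTheory.integral_const_mul]
    rw [integral_integral hk1i, integral_integral hk2i]
  -- Step 2: lower bound on ∫ k1
  have hrpow_cont : Continuous (fun p : Phase d × Phase d => ‖p.1.2 - p.2.2‖ ^ (2 * α)) :=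
    (continuous_fst.snd.sub continuous_snd.snd).norm.rpow_const
      (fun p => Or.inr (by positivity))
  have hrpi : Integrable (fun p : Phase d × Phase d => ‖p.1.2 - p.2.2‖ ^ (2 * α)) (μ.prod μ) :=
    integrable_of_compact_null hK2 h02 hrpow_cont
  have hdevsqi : Integrable (fun p : Phase d × Phase d => ‖p.1.2 - p.2.2‖ ^ 2) (μ.prod μ) :=
    integrable_of_compact_null hK2 h02 ((continuous_fst.snd.sub continuous_snd.snd).norm.pow 2)
  have hdevi : Integrable (fun p : Phase d × Phase d => ‖p.1.2 - p.2.2‖) (μ.prod μ) :=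
    integrable_of_compact_null hK2 h02 (continuous_fst.snd.sub continuous_snd.snd).norm
  have hdouble : ∫ p, ‖p.1.2 - p.2.2‖ ^ 2 ∂(μ.prod μ) = 2 * 𝒢 :=
    double_integral_dev μ hK h0
  have hswap1 : ∫ p, k1 p ∂(μ.prod μ)
      = (1/2) * ∫ p, (k1 p + k1 p.swap) ∂(μ.prod μ) := by
    rw [integral_add hk1i hk1si, integral_swap_eq μ hk1c.aestronglyMeasurable]
    ring
  have hsum1 : ∀ p : Phase d × Phase d,
      Φs * (Gs * ‖p.1.2 - p.2.2‖ ^ (2 * α)) ≤ k1 p + k1 p.swap := by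
    rintro ⟨⟨x, v⟩, ⟨y, w⟩⟩
    have hGw : G (w - v) = - G (v - w) := by
      rw [show w - v = -(v - w) by abel, hGodd]
    have hsum : k1 ((x,v),(y,w)) + k1 ((x,v),(y,w)).swap
        = Φ ‖x - y‖ * ⟪G (v - w), v - w⟫ := by
      show Φ ‖x - y‖ * ⟪v, G (v - w)⟫ + Φ ‖y - x‖ * ⟪w, G (w - v)⟫
          = Φ ‖x - y‖ * ⟪G (v - w), v - w⟫
      rw [norm_sub_rev y x, hGw, inner_sub_right]
      simp only [inner_neg_right]
      rw [real_inner_comm (G (v - w)) v, real_inner_comm (G (v - w)) w]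
      ring
    rw [hsum]
    have h1 : (0:ℝ) ≤ ⟪G (v - w), v - w⟫ :=
      le_trans (by positivity) (hGcoer (v - w))
    calc Φs * (Gs * ‖v - w‖ ^ (2*α)) ≤ Φs * ⟪G (v - w), v - w⟫ := by
          exact mul_le_mul_of_nonneg_left (hGcoer _) (le_of_lt hΦs)
      _ ≤ Φ ‖x - y‖ * ⟪G (v - w), v - w⟫ :=
          mul_le_mul_of_nonneg_right (hΦlow _) h1
  have hjensen : (2 * 𝒢) ^ α ≤ ∫ p, ‖p.1.2 - p.2.2‖ ^ (2 * α) ∂(μ.prod μ) := by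
    have hpow : ∀ p : Phase d × Phase d,
        ‖p.1.2 - p.2.2‖ ^ (2 * α) = (‖p.1.2 - p.2.2‖ ^ 2) ^ α := by
      intro p
      rw [← Real.rpow_natCast ‖p.1.2 - p.2.2‖ 2, ← Real.rpow_mul (norm_nonneg _)]
      norm_num
    have h := jensen_rpow (μ := μ.prod μ) hα
      (g := fun p : Phase d × Phase d => ‖p.1.2 - p.2.2‖ ^ 2)
      (fun p => sq_nonneg _) hdevsqi (by simp_rw [← hpow]; exact hrpi)
    rw [hdouble] at h
    simp_rw [hpow]
    exact h
  have hk1lb : (1/2) * (Φs * Gs * (2 * 𝒢) ^ α) ≤ ∫ p, k1 p ∂(μ.prod μ) := by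
    rw [hswap1]
    have hmono : ∫ p, Φs * (Gs * ‖p.1.2 - p.2.2‖ ^ (2*α)) ∂(μ.prod μ)
        ≤ ∫ p, (k1 p + k1 p.swap) ∂(μ.prod μ) :=
      integral_mono ((hrpi.const_mul Gs).const_mul Φs) (hk1i.add hk1si) hsum1
    rw [MeasureTheory.integral_const_mul, MeasureTheory.integral_const_mul] at hmono
    have : Φs * Gs * (2 * 𝒢) ^ α ≤ Φs * (Gs * ∫ p, ‖p.1.2 - p.2.2‖ ^ (2*α) ∂(μ.prod μ)) := by
      have := mul_le_mul_of_nonneg_left hjensen (le_of_lt hGs)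
      have := mul_le_mul_of_nonneg_left this (le_of_lt hΦs)
      linarith
    have := le_trans this hmono
    linarith
  -- Step 3: upper bound on ∫ k2
  have hsum2 : ∀ p : Phase d × Phase d,
      k2 p + k2 p.swap ≤ Fs * ‖p.1.2 - p.2.2‖ := by
    rintro ⟨⟨x, v⟩, ⟨y, w⟩⟩
    have hsum : k2 ((x,v),(y,w)) + k2 ((x,v),(y,w)).swap
        = F (‖x - y‖ ^ 2) * ⟪v - w, x - y⟫ := by
      show F (‖x - y‖ ^ 2) * ⟪v, x - y⟫ + F (‖y - x‖ ^ 2) * ⟪w, y - x⟫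
          = F (‖x - y‖ ^ 2) * ⟪v - w, x - y⟫
      rw [norm_sub_rev y x, show (y - x : Euc d) = -(x - y) by abel, inner_neg_right,
        inner_sub_left]
      ring
    rw [hsum]
    have : F (‖x - y‖ ^ 2) * ⟪v - w, x - y⟫ = ⟪v - w, F (‖x - y‖ ^ 2) • (x - y)⟫ := by
      rw [real_inner_smul_right]
    rw [this]
    calc ⟪v - w, F (‖x - y‖ ^ 2) • (x - y)⟫
        ≤ ‖v - w‖ * ‖F (‖x - y‖ ^ 2) • (x - y)‖ := real_inner_le_norm _ _
      _ ≤ ‖v - w‖ * Fs := mul_le_mul_of_nonneg_left (hFbd _) (norm_nonneg _)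
      _ = Fs * ‖v - w‖ := by ring
  have hk2ub : ∫ p, k2 p ∂(μ.prod μ) ≤ (1/2) * (Fs * Real.sqrt (2 * 𝒢)) := by
    have hswap2 : ∫ p, k2 p ∂(μ.prod μ)
        = (1/2) * ∫ p, (k2 p + k2 p.swap) ∂(μ.prod μ) := by
      rw [integral_add hk2i hk2si, integral_swap_eq μ hk2c.aestronglyMeasurable]
      ring
    rw [hswap2]
    have hmono : ∫ p, (k2 p + k2 p.swap) ∂(μ.prod μ)
        ≤ ∫ p, Fs * ‖p.1.2 - p.2.2‖ ∂(μ.prod μ) :=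
      integral_mono (hk2i.add hk2si) (hdevi.const_mul Fs) hsum2
    rw [MeasureTheory.integral_const_mul] at hmono
    have hl1 : ∫ p, ‖p.1.2 - p.2.2‖ ∂(μ.prod μ) ≤ Real.sqrt (2 * 𝒢) := by
      have := integral_le_sqrt_integral_sq (μ := μ.prod μ)
        (g := fun p : Phase d × Phase d => ‖p.1.2 - p.2.2‖) hdevi hdevsqi
      rw [hdouble] at this
      exact this
    have : Fs * ∫ p, ‖p.1.2 - p.2.2‖ ∂(μ.prod μ) ≤ Fs * Real.sqrt (2 * 𝒢) :=
      mul_le_mul_of_nonneg_left hl1 hFs0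
    linarith
  -- Step 4: assemble
  rw [step1]
  have hterm2 : c * ∫ p, k2 p ∂(μ.prod μ) ≤ c * ((1/2) * (Fs * Real.sqrt (2 * 𝒢))) :=
    mul_le_mul_of_nonneg_left hk2ub hc
  have hcsqrt : c * Real.sqrt 𝒢 = 𝒢 ^ α := by
    rw [Real.sqrt_eq_rpow, hcdef, ← Real.rpow_add' h𝒢 (by intro h; rw [show (2*α-1)/2 + 1/2 = α by ring] at h; linarith)]
    congr 1
    ring
  have h2pow : (2 * 𝒢) ^ α = 2 ^ α * 𝒢 ^ α := Real.mul_rpow (by norm_num) h𝒢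
  have hsqrt2 : Real.sqrt (2 * 𝒢) = Real.sqrt 2 * Real.sqrt 𝒢 := Real.sqrt_mul (by norm_num) _
  calc -(∫ p, k1 p ∂(μ.prod μ)) + c * ∫ p, k2 p ∂(μ.prod μ)
      ≤ -((1/2) * (Φs * Gs * (2 * 𝒢) ^ α)) + c * ((1/2) * (Fs * Real.sqrt (2 * 𝒢))) := by
        have := neg_le_neg hk1lb
        linarith
    _ = -(((2:ℝ) ^ α * Φs * Gs - Real.sqrt 2 * Fs) / 2) * 𝒢 ^ α := by
        rw [h2pow, hsqrt2]
        have : c * ((1/2) * (Fs * (Real.sqrt 2 * Real.sqrt 𝒢)))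
            = (1/2) * Fs * Real.sqrt 2 * (c * Real.sqrt 𝒢) := by ring
        rw [this, hcsqrt]
        ring

end KB

section WS

variable {d : ℕ}

/-- The interaction field integrates inner-against any fixed vector to zero. -/
lemma integral_inner_H_zero (Φ F : ℝ → ℝ) (G : Euc d → Euc d) (α : ℝ)
    (hΦc : Continuous Φ) (hGc : Continuous G) (hFc : Continuous F)
    (hGodd : ∀ v : Euc d, G (-v) = -G v)
    (μ : Measure (Phase d)) [IsProbabilityMeasure μ]
    {K : Set (Phase d)} (hK : IsCompact K) (h0 : μ Kᶜ = 0) (e : Euc d) :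
    ∫ z, ⟪e, Hfield Φ G F α μ z.1 z.2⟫ ∂μ = 0 := by
  have hK2 : IsCompact (K ×ˢ K) := hK.prod hK
  have h02 : (μ.prod μ) (K ×ˢ K)ᶜ = 0 := prod_compl_null h0
  set c := velFluc μ ^ ((2 * α - 1) / 2) with hcdef
  set k1 : Phase d × Phase d → ℝ :=
    fun p => Φ ‖p.1.1 - p.2.1‖ * ⟪e, G (p.1.2 - p.2.2)⟫ with hk1def
  set k2 : Phase d × Phase d → ℝ :=
    fun p => F (‖p.1.1 - p.2.1‖ ^ 2) * ⟪e, p.1.1 - p.2.1⟫ with hk2def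
  have hk1c : Continuous k1 :=
    (hΦc.comp (continuous_fst.fst.sub continuous_snd.fst).norm).mul
      (continuous_const.inner (hGc.comp (continuous_fst.snd.sub continuous_snd.snd)))
  have hk2c : Continuous k2 :=
    (hFc.comp ((continuous_fst.fst.sub continuous_snd.fst).norm.pow 2)).mul
      (continuous_const.inner (continuous_fst.fst.sub continuous_snd.fst))
  have hk1i : Integrable k1 (μ.prod μ) := integrable_of_compact_null hK2 h02 hk1c
  have hk2i : Integrable k2 (μ.prod μ) := integrable_of_compact_null hK2 h02 hk2c
  have hpt : ∀ z : Phase d, ⟪e, Hfield Φ G F α μ z.1 z.2⟫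
      = -(∫ z', k1 (z, z') ∂μ) + c * ∫ z', k2 (z, z') ∂μ := by
    intro z
    have hAi : Integrable (fun z' : Phase d => Φ ‖z.1 - z'.1‖ • G (z.2 - z'.2)) μ :=
      integrable_of_compact_null hK h0
        ((hΦc.comp (continuous_const.sub continuous_fst).norm).smul
          (hGc.comp (continuous_const.sub continuous_snd)))
    have hBi : Integrable (fun z' : Phase d => F (‖z.1 - z'.1‖ ^ 2) • (z.1 - z'.1)) μ :=
      integrable_of_compact_null hK h0
        ((hFc.comp ((continuous_const.sub continuous_fst).norm.pow 2)).smul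
          (continuous_const.sub continuous_fst))
    rw [Hfield, inner_add_right, inner_neg_right, real_inner_smul_right]
    rw [← integral_inner hAi, ← integral_inner hBi]
    have e1 : ∀ z' : Phase d, ⟪e, Φ ‖z.1 - z'.1‖ • G (z.2 - z'.2)⟫ = k1 (z, z') := by
      intro z'; rw [real_inner_smul_right]
    have e2 : ∀ z' : Phase d, ⟪e, F (‖z.1 - z'.1‖ ^ 2) • (z.1 - z'.1)⟫ = k2 (z, z') := by
      intro z'; rw [real_inner_smul_right]
    simp_rw [e1, e2]
    rfl
  simp_rw [hpt]
  have hi1 : Integrable (fun z : Phase d => ∫ z', k1 (z, z') ∂μ) μ :=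
    hk1i.integral_prod_left
  have hi2 : Integrable (fun z : Phase d => ∫ z', k2 (z, z') ∂μ) μ :=
    hk2i.integral_prod_left
  have hi1' : Integrable (fun z : Phase d => -(∫ z', k1 (z, z') ∂μ)) μ := hi1.neg
  have hi2' : Integrable (fun z : Phase d => c * ∫ z', k2 (z, z') ∂μ) μ := hi2.const_mul c
  rw [integral_add hi1' hi2', integral_neg, MeasureTheory.integral_const_mul]
  rw [integral_integral hk1i, integral_integral hk2i]
  have hz1 : ∫ p, k1 p ∂(μ.prod μ) = 0 := by
    refine integral_antisymm_zero μ hk1c ?_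
    rintro ⟨⟨x, v⟩, ⟨y, w⟩⟩
    show Φ ‖y - x‖ * ⟪e, G (w - v)⟫ = -(Φ ‖x - y‖ * ⟪e, G (v - w)⟫)
    rw [norm_sub_rev y x, show (w - v : Euc d) = -(v - w) by abel, hGodd, inner_neg_right]
    ring
  have hz2 : ∫ p, k2 p ∂(μ.prod μ) = 0 := by
    refine integral_antisymm_zero μ hk2c ?_
    rintro ⟨⟨x, v⟩, ⟨y, w⟩⟩
    show F (‖y - x‖ ^ 2) * ⟪e, y - x⟫ = -(F (‖x - y‖ ^ 2) * ⟪e, x - y⟫)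
    rw [norm_sub_rev y x, show (y - x : Euc d) = -(x - y) by abel, inner_neg_right]
    ring
  rw [hz1, hz2]
  ring

/-- Conservation of the mean velocity. -/
lemma mean_conserved (Φ F : ℝ → ℝ) (G : Euc d → Euc d) (α : ℝ)
    (hΦc : Continuous Φ) (hGc : Continuous G) (hFc : Continuous F)
    (hGodd : ∀ v : Euc d, G (-v) = -G v)
    (f : ℝ → Measure (Phase d)) (hsol : IsWeakSolution Φ G F α (Set.Ici 0) f) :
    ∀ t ∈ Set.Ici (0:ℝ), ∫ z, z.2 ∂(f t) = ∫ z, z.2 ∂(f 0) := by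
  intro t ht
  refine ext_inner_left ℝ fun e => ?_
  set L : Phase d →L[ℝ] ℝ :=
    (innerSL ℝ e).comp (ContinuousLinearMap.snd ℝ (Euc d) (Euc d)) with hLdef
  have hder : ∀ s ∈ Set.Ici (0:ℝ),
      HasDerivWithinAt (fun u => ∫ z, L z ∂(f u)) 0 (Set.Ici 0) s := by
    intro s hs
    have h := hsol.2 (⇑L) L.contDiff s hs
    obtain ⟨hprob, K, hK, h0⟩ := hsol.1 s hs
    haveI := hprob
    have hfder : ∫ z, fderiv ℝ (⇑L) z (z.2, Hfield Φ G F α (f s) z.1 z.2) ∂(f s) = 0 := by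
      have : ∀ z : Phase d, fderiv ℝ (⇑L) z (z.2, Hfield Φ G F α (f s) z.1 z.2)
          = ⟪e, Hfield Φ G F α (f s) z.1 z.2⟫ := by
        intro z
        rw [L.fderiv]
        simp [hLdef]
      simp_rw [this]
      exact integral_inner_H_zero Φ F G α hΦc hGc hFc hGodd (f s) hK h0 e
    rw [hfder] at h
    exact h
  have hconst : (∫ z, L z ∂(f t)) = ∫ z, L z ∂(f 0) := by
    rcases eq_or_lt_of_le (Set.mem_Ici.mp ht) with h | h
    · rw [← h]
    · have hcont : ContinuousOn (fun u => ∫ z, L z ∂(f u)) (Set.Icc 0 t) := by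
        intro s hs
        exact ((hder s hs.1).continuousWithinAt).mono (fun u hu => hu.1)
      have hdr : ∀ s ∈ Set.Ico (0:ℝ) t,
          HasDerivWithinAt (fun u => ∫ z, L z ∂(f u)) 0 (Set.Ici s) s := by
        intro s hs
        exact (hder s hs.1).mono (fun u hu => le_trans hs.1 hu)
      exact constant_of_has_deriv_right_zero hcont hdr t ⟨le_of_lt h, le_refl t⟩
  obtain ⟨hprobt, Kt, hKt, h0t⟩ := hsol.1 t ht
  obtain ⟨hprob0, K0, hK0, h00⟩ := hsol.1 0 Set.self_mem_Ici
  haveI := hprobt; haveI := hprob0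
  have hIt : Integrable (fun z : Phase d => z.2) (f t) :=
    integrable_of_compact_null hKt h0t continuous_snd
  have hI0 : Integrable (fun z : Phase d => z.2) (f 0) :=
    integrable_of_compact_null hK0 h00 continuous_snd
  have hL : ∀ μ' : Measure (Phase d), Integrable (fun z : Phase d => z.2) μ' →
      ∫ z, L z ∂μ' = ⟪e, ∫ z : Phase d, z.2 ∂μ'⟫ := by
    intro μ' hi
    have : ∀ z : Phase d, L z = ⟪e, z.2⟫ := fun z => by simp [hLdef]
    simp_rw [this]
    exact integral_inner hi e
  rw [hL (f t) hIt, hL (f 0) hI0] at hconst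
  exact hconst

end WS

section Decay

lemma linear_decay {y D : ℝ → ℝ}
    (hy : ∀ t ∈ Set.Ici (0:ℝ), HasDerivWithinAt y (D t) (Set.Ici 0) t)
    {B : ℝ} (hD : ∀ t ∈ Set.Ici (0:ℝ), D t ≤ -B) :
    AntitoneOn (fun s => y s + B * s) (Set.Ici 0) := by
  have hh : ∀ t ∈ Set.Ici (0:ℝ),
      HasDerivWithinAt (fun s => y s + B * s) (D t + B) (Set.Ici 0) t := by
    intro t ht
    have h2 : HasDerivWithinAt (fun s : ℝ => B * s) B (Set.Ici 0) t := by
      simpa using ((hasDerivAt_id t).const_mul B).hasDerivWithinAt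
    exact (hy t ht).add h2
  apply antitoneOn_of_deriv_nonpos (convex_Ici 0)
  · intro t ht
    exact (hh t ht).continuousWithinAt
  · intro t ht
    rw [interior_Ici] at ht
    exact ((hh t (Set.mem_Ici.mpr (le_of_lt ht))).hasDerivAt
      (Ici_mem_nhds ht)).differentiableAt.differentiableWithinAt
  · intro t ht
    rw [interior_Ici] at ht
    rw [((hh t (Set.mem_Ici.mpr (le_of_lt ht))).hasDerivAt (Ici_mem_nhds ht)).deriv]
    have := hD t (Set.mem_Ici.mpr (le_of_lt ht))
    linarith

lemma tendsto_zero_of_decay {y D : ℝ → ℝ}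
    (hy : ∀ t ∈ Set.Ici (0:ℝ), HasDerivWithinAt y (D t) (Set.Ici 0) t)
    (hy0 : ∀ t ∈ Set.Ici (0:ℝ), 0 ≤ y t)
    {C α : ℝ} (hC : 0 < C) (hα : 0 ≤ α)
    (hD : ∀ t ∈ Set.Ici (0:ℝ), D t ≤ -(C * y t ^ α)) :
    Filter.Tendsto y Filter.atTop (nhds 0) := by
  have hanti : AntitoneOn y (Set.Ici 0) := by
    have h0 : ∀ t ∈ Set.Ici (0:ℝ), D t ≤ -(0:ℝ) := by
      intro t ht
      have h1 : 0 ≤ C * y t ^ α :=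
        mul_nonneg (le_of_lt hC) (Real.rpow_nonneg (hy0 t ht) α)
      have := hD t ht
      linarith
    have := linear_decay hy h0
    simpa only [zero_mul, add_zero] using this
  set Z : ℝ → ℝ := fun t => y (max t 0) with hZdef
  have hZanti : Antitone Z := by
    intro s t hst
    exact hanti (le_max_right s 0) (le_max_right t 0) (max_le_max hst (le_refl 0))
  have hZ0 : ∀ t, 0 ≤ Z t := fun t => hy0 _ (Set.mem_Ici.mpr (le_max_right _ _))
  have hbdd : BddBelow (Set.range Z) := ⟨0, by rintro _ ⟨t, rfl⟩; exact hZ0 t⟩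
  have htend := tendsto_atTop_ciInf hZanti hbdd
  set L := ⨅ t, Z t with hLdef
  have hL0 : 0 ≤ L := le_ciInf hZ0
  have hLle : ∀ t, L ≤ Z t := fun t => ciInf_le hbdd t
  have hLzero : L = 0 := by
    by_contra hne
    have hL : 0 < L := lt_of_le_of_ne hL0 (Ne.symm hne)
    have hB : 0 < C * L ^ α := mul_pos hC (Real.rpow_pos_of_pos hL α)
    have hD' : ∀ t ∈ Set.Ici (0:ℝ), D t ≤ -(C * L ^ α) := by
      intro t ht
      have h1 : L ≤ y t := by
        have h := hLle t
        have he : Z t = y t := by simp only [hZdef, max_eq_left (Set.mem_Ici.mp ht)]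
        rwa [he] at h
      have h2 : L ^ α ≤ y t ^ α := Real.rpow_le_rpow hL0 h1 hα
      have := hD t ht
      nlinarith
    have hmono := linear_decay hy hD'
    set B := C * L ^ α with hBdef
    set T := (y 0 + 1) / B with hT
    have hy00 : 0 ≤ y 0 := hy0 0 Set.self_mem_Ici
    have hT0 : (0:ℝ) ≤ T := div_nonneg (by linarith) (le_of_lt hB)
    have hle := hmono (Set.self_mem_Ici) (hT0 : T ∈ Set.Ici 0) hT0
    simp only [mul_zero, add_zero] at hle
    have hBT : B * T = y 0 + 1 := by
      rw [hT]
      field_simp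
    have := hy0 T hT0
    rw [hBT] at hle
    linarith
  rw [hLzero] at htend
  refine htend.congr' ?_
  filter_upwards [Filter.eventually_ge_atTop (0:ℝ)] with t ht
  simp only [hZdef, max_eq_left ht]

end Decay

section VDeriv

variable {d : ℕ}

lemma velFluc_hasDeriv (Φ F : ℝ → ℝ) (G : Euc d → Euc d) (α : ℝ)
    (hΦc : Continuous Φ) (hGc : Continuous G) (hFc : Continuous F)
    (hGodd : ∀ v : Euc d, G (-v) = -G v)
    (f : ℝ → Measure (Phase d)) (hsol : IsWeakSolution Φ G F α (Set.Ici 0) f) :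
    ∀ t ∈ Set.Ici (0:ℝ), HasDerivWithinAt (fun s => velFluc (f s))
      (2 * ∫ z, ⟪z.2, Hfield Φ G F α (f t) z.1 z.2⟫ ∂(f t)) (Set.Ici 0) t := by
  intro t ht
  have hφ : ContDiff ℝ 1 (fun z : Phase d => ‖z.2‖ ^ 2) := contDiff_snd.norm_sq (𝕜 := ℝ)
  have hder := hsol.2 _ hφ t ht
  obtain ⟨hprob, K, hK, h0⟩ := hsol.1 t ht
  haveI := hprob
  have hfd : ∀ z : Phase d,
      fderiv ℝ (fun z : Phase d => ‖z.2‖ ^ 2) z (z.2, Hfield Φ G F α (f t) z.1 z.2)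
        = 2 * ⟪z.2, Hfield Φ G F α (f t) z.1 z.2⟫ := by
    intro z
    have hF : HasFDerivAt (fun z : Phase d => ‖z.2‖ ^ 2)
        (2 • (innerSL ℝ z.2).comp (ContinuousLinearMap.snd ℝ (Euc d) (Euc d))) z :=
      (hasFDerivAt_snd (𝕜 := ℝ)).norm_sq
    rw [hF.fderiv]
    simp
  simp_rw [hfd] at hder
  rw [MeasureTheory.integral_const_mul] at hder
  -- identify velFluc (f s) with (∫ ‖v‖²) - ‖V₀‖² on Ici 0
  set V₀ := ∫ z : Phase d, z.2 ∂(f 0) with hV₀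
  have hcons := mean_conserved Φ F G α hΦc hGc hFc hGodd f hsol
  have hEq : ∀ s ∈ Set.Ici (0:ℝ),
      velFluc (f s) = (∫ z : Phase d, ‖z.2‖ ^ 2 ∂(f s)) - ‖V₀‖ ^ 2 := by
    intro s hs
    rw [velFluc, hcons s hs]
  exact (hder.sub_const (‖V₀‖ ^ 2)).congr hEq (hEq t ht)

end VDeriv

section PnormLemmas

variable {d : ℕ}

lemma pnorm_nonneg (z : Phase d) : 0 ≤ pnorm z := Real.sqrt_nonneg _

lemma pnorm_le_add (z : Phase d) : pnorm z ≤ ‖z.1‖ + ‖z.2‖ := by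
  rw [pnorm]
  have h1 : ‖z.1‖ ^ 2 + ‖z.2‖ ^ 2 ≤ (‖z.1‖ + ‖z.2‖) ^ 2 := by
    nlinarith [norm_nonneg z.1, norm_nonneg z.2]
  calc Real.sqrt (‖z.1‖ ^ 2 + ‖z.2‖ ^ 2) ≤ Real.sqrt ((‖z.1‖ + ‖z.2‖) ^ 2) :=
        Real.sqrt_le_sqrt h1
    _ = ‖z.1‖ + ‖z.2‖ := Real.sqrt_sq (by positivity)

lemma pnorm_sub_snd (z : Phase d) (W : Euc d) : pnorm (z - (z.1, W)) = ‖z.2 - W‖ := by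
  show Real.sqrt (‖z.1 - z.1‖ ^ 2 + ‖z.2 - W‖ ^ 2) = ‖z.2 - W‖
  rw [sub_self, norm_zero]
  simp [Real.sqrt_sq (norm_nonneg _)]

end PnormLemmas

end

/-- convergence of the solution to the monokinetic profile
ρ_t ⊗ δ_(v = 𝒱₀) in the bounded Lipschitz distance. -/
theorem stmt18 {d : ℕ} (hd : 1 ≤ d) (Φ F : ℝ → ℝ) (G : Euc d → Euc d) (α : ℝ)
    (hΦc : Continuous Φ) (hGc : Continuous G) (hFc : Continuous F)
    (hα : 1 ≤ α ∧ α < 5 / 4)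
    (Gs Φs Fs : ℝ) (hGs : 0 < Gs) (hΦs : 0 < Φs)
    (hGodd : ∀ v : Euc d, G (-v) = -G v)
    (hGcoer : ∀ v : Euc d, Gs * ‖v‖ ^ (2 * α) ≤ ⟪G v, v⟫)
    (hΦlow : ∀ x : Euc d, Φs ≤ Φ ‖x‖)
    (hFbd : ∀ x : Euc d, ‖F (‖x‖ ^ 2) • x‖ ≤ Fs)
    (hFs : Fs < (2 : ℝ) ^ (α - 1 / 2) * Φs * Gs)
    (f : ℝ → Measure (Phase d))
    (hsol : IsWeakSolution Φ G F α (Set.Ici 0) f)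
    (V₀ : Euc d) (hV₀ : V₀ = ∫ z, z.2 ∂(f 0))
    (ν : ℝ → Measure (Phase d))
    (hν : ∀ t : ℝ, ν t = (f t).map (fun z : Phase d => (z.1, V₀))) :
    (∀ t ∈ Set.Ici (0 : ℝ), ∀ φ : Phase d → ℝ,
      (∀ z, |φ z| ≤ 1) → (∀ z₁ z₂ : Phase d, |φ z₁ - φ z₂| ≤ pnorm (z₁ - z₂)) →
        |(∫ z, φ z ∂(f t)) - ∫ z, φ z ∂(ν t)| ≤ (∫ z, ‖z.2 - V₀‖ ∂(f t)) ∧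
        (∫ z, ‖z.2 - V₀‖ ∂(f t)) ≤ Real.sqrt (velFluc (f t))) ∧
    Tendsto (fun t =>
        sSup {c : ℝ | ∃ φ : Phase d → ℝ, (∀ z, |φ z| ≤ 1) ∧
          (∀ z₁ z₂ : Phase d, |φ z₁ - φ z₂| ≤ pnorm (z₁ - z₂)) ∧
          c = |(∫ z, φ z ∂(f t)) - ∫ z, φ z ∂(ν t)|})
      atTop (nhds 0) := by

  obtain ⟨hα1, hα54⟩ := hα
  -- the positive constant
  set C : ℝ := (2:ℝ) ^ α * Φs * Gs - Real.sqrt 2 * Fs with hCdef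
  have hkey2 : Real.sqrt 2 * (2:ℝ) ^ (α - 1/2) = (2:ℝ) ^ α := by
    rw [Real.sqrt_eq_rpow, ← Real.rpow_add (by norm_num : (0:ℝ) < 2)]
    congr 1
    ring
  have hC : 0 < C := by
    have hs2 : (0:ℝ) < Real.sqrt 2 := Real.sqrt_pos.2 (by norm_num)
    have h1 : Real.sqrt 2 * Fs < Real.sqrt 2 * ((2:ℝ) ^ (α - 1/2) * Φs * Gs) :=
      mul_lt_mul_of_pos_left hFs hs2
    have h2 : Real.sqrt 2 * ((2:ℝ) ^ (α - 1/2) * Φs * Gs) = (2:ℝ) ^ α * Φs * Gs := by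
      rw [← hkey2]; ring
    rw [h2] at h1
    rw [hCdef]
    linarith
  -- mean velocity conservation
  have hmean : ∀ t ∈ Set.Ici (0:ℝ), ∫ z, z.2 ∂(f t) = V₀ := by
    intro t ht
    rw [hV₀]
    exact mean_conserved Φ F G α hΦc hGc hFc hGodd f hsol t ht
  -- Part 1
  have part1 : ∀ t ∈ Set.Ici (0 : ℝ), ∀ φ : Phase d → ℝ,
      (∀ z, |φ z| ≤ 1) → (∀ z₁ z₂ : Phase d, |φ z₁ - φ z₂| ≤ pnorm (z₁ - z₂)) →
        |(∫ z, φ z ∂(f t)) - ∫ z, φ z ∂(ν t)| ≤ (∫ z, ‖z.2 - V₀‖ ∂(f t)) ∧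
        (∫ z, ‖z.2 - V₀‖ ∂(f t)) ≤ Real.sqrt (velFluc (f t)) := by
    intro t ht φ hbd hlip
    obtain ⟨hprob, K, hK, h0⟩ := hsol.1 t ht
    haveI := hprob
    have hvint : Integrable (fun z : Phase d => ‖z.2 - V₀‖) (f t) :=
      integrable_of_compact_null hK h0 (continuous_snd.sub continuous_const).norm
    have hvsqint : Integrable (fun z : Phase d => ‖z.2 - V₀‖ ^ 2) (f t) :=
      integrable_of_compact_null hK h0 ((continuous_snd.sub continuous_const).norm.pow 2)
    -- φ is continuous
    have hφcont : Continuous φ := by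
      refine continuous_iff_continuousAt.2 fun z₀ => ?_
      rw [ContinuousAt, tendsto_iff_dist_tendsto_zero]
      have hle : ∀ z : Phase d, dist (φ z) (φ z₀) ≤ ‖z.1 - z₀.1‖ + ‖z.2 - z₀.2‖ := by
        intro z
        have h1 := hlip z z₀
        have h2 : pnorm (z - z₀) ≤ ‖(z - z₀).1‖ + ‖(z - z₀).2‖ := pnorm_le_add _
        rw [Real.dist_eq]
        exact le_trans h1 h2
      have htend : Filter.Tendsto (fun z : Phase d => ‖z.1 - z₀.1‖ + ‖z.2 - z₀.2‖)
          (nhds z₀) (nhds 0) := by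
        have hc : Continuous (fun z : Phase d => ‖z.1 - z₀.1‖ + ‖z.2 - z₀.2‖) :=
          ((continuous_fst.sub continuous_const).norm).add
            ((continuous_snd.sub continuous_const).norm)
        have := hc.tendsto z₀
        simpa using this
      exact squeeze_zero (fun z => dist_nonneg) hle htend
    have hφint : Integrable φ (f t) := integrable_of_compact_null hK h0 hφcont
    have hφmint : Integrable (fun z : Phase d => φ (z.1, V₀)) (f t) :=
      integrable_of_compact_null hK h0 (hφcont.comp (continuous_fst.prodMk continuous_const))
    have hνt : ∫ z, φ z ∂(ν t) = ∫ z, φ (z.1, V₀) ∂(f t) := by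
      rw [hν t]
      exact integral_map (continuous_fst.prodMk continuous_const).aemeasurable
        hφcont.aestronglyMeasurable
    constructor
    · rw [hνt, ← integral_sub hφint hφmint]
      have habs : |∫ z, (φ z - φ (z.1, V₀)) ∂(f t)| ≤ ∫ z, |φ z - φ (z.1, V₀)| ∂(f t) := by
        have := MeasureTheory.norm_integral_le_integral_norm
          (f := fun z : Phase d => φ z - φ (z.1, V₀)) (μ := f t)
        simpa [Real.norm_eq_abs] using this
      refine le_trans habs (integral_mono (hφint.sub hφmint).abs hvint ?_)
      intro z
      have h1 := hlip z (z.1, V₀)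
      rwa [pnorm_sub_snd] at h1
    · have hdev : ∫ z, ‖z.2 - V₀‖ ^ 2 ∂(f t) = velFluc (f t) := by
        rw [integral_dev_sq (f t) hK h0 V₀, velFluc, hmean t ht, real_inner_self_eq_norm_sq]
        ring
      have := integral_le_sqrt_integral_sq hvint hvsqint
      rwa [hdev] at this
  refine ⟨part1, ?_⟩
  -- decay of the velocity fluctuation
  have hy : ∀ t ∈ Set.Ici (0:ℝ), HasDerivWithinAt (fun s => velFluc (f s))
      (2 * ∫ z, ⟪z.2, Hfield Φ G F α (f t) z.1 z.2⟫ ∂(f t)) (Set.Ici 0) t :=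
    velFluc_hasDeriv Φ F G α hΦc hGc hFc hGodd f hsol
  have hynn : ∀ t ∈ Set.Ici (0:ℝ), 0 ≤ velFluc (f t) := by
    intro t ht
    obtain ⟨hprob, K, hK, h0⟩ := hsol.1 t ht
    haveI := hprob
    exact velFluc_nonneg (f t) hK h0
  have hDle : ∀ t ∈ Set.Ici (0:ℝ),
      (2 * ∫ z, ⟪z.2, Hfield Φ G F α (f t) z.1 z.2⟫ ∂(f t))
        ≤ -(C * velFluc (f t) ^ α) := by
    intro t ht
    obtain ⟨hprob, K, hK, h0⟩ := hsol.1 t ht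
    haveI := hprob
    have hkb := key_bound Φ F G α hΦc hGc hFc hα1 Gs Φs Fs hGs hΦs hGodd hGcoer hΦlow hFbd
      (f t) hK h0
    have h2 : (2:ℝ) * ∫ z, ⟪z.2, Hfield Φ G F α (f t) z.1 z.2⟫ ∂(f t)
        ≤ 2 * (-(C / 2) * velFluc (f t) ^ α) := by
      have := mul_le_mul_of_nonneg_left hkb (by norm_num : (0:ℝ) ≤ 2)
      exact this
    calc (2:ℝ) * ∫ z, ⟪z.2, Hfield Φ G F α (f t) z.1 z.2⟫ ∂(f t)
        ≤ 2 * (-(C / 2) * velFluc (f t) ^ α) := h2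
      _ = -(C * velFluc (f t) ^ α) := by ring
  have hylim : Filter.Tendsto (fun s => velFluc (f s)) Filter.atTop (nhds 0) :=
    tendsto_zero_of_decay hy hynn hC (le_trans zero_le_one hα1) hDle
  have hsqrtlim : Filter.Tendsto (fun s => Real.sqrt (velFluc (f s))) Filter.atTop (nhds 0) := by
    have := (Real.continuous_sqrt.tendsto 0).comp hylim
    simpa [Function.comp_def] using this
  refine tendsto_of_tendsto_of_tendsto_of_le_of_le' tendsto_const_nhds hsqrtlim ?_ ?_
  · filter_upwards [Filter.eventually_ge_atTop (0:ℝ)] with t ht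
    have hmem : (0:ℝ) ∈ {c : ℝ | ∃ φ : Phase d → ℝ, (∀ z, |φ z| ≤ 1) ∧
        (∀ z₁ z₂ : Phase d, |φ z₁ - φ z₂| ≤ pnorm (z₁ - z₂)) ∧
        c = |(∫ z, φ z ∂(f t)) - ∫ z, φ z ∂(ν t)|} := by
      refine ⟨fun _ => 0, fun z => by norm_num, fun z₁ z₂ => by simpa using pnorm_nonneg _, ?_⟩
      simp
    have hbdd : BddAbove {c : ℝ | ∃ φ : Phase d → ℝ, (∀ z, |φ z| ≤ 1) ∧
        (∀ z₁ z₂ : Phase d, |φ z₁ - φ z₂| ≤ pnorm (z₁ - z₂)) ∧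
        c = |(∫ z, φ z ∂(f t)) - ∫ z, φ z ∂(ν t)|} := by
      refine ⟨Real.sqrt (velFluc (f t)), ?_⟩
      rintro c ⟨φ, hb, hl, rfl⟩
      obtain ⟨h1, h2⟩ := part1 t ht φ hb hl
      exact le_trans h1 h2
    exact le_csSup hbdd hmem
  · filter_upwards [Filter.eventually_ge_atTop (0:ℝ)] with t ht
    refine csSup_le ⟨0, ?_⟩ ?_
    · refine ⟨fun _ => 0, fun z => by norm_num, fun z₁ z₂ => by simpa using pnorm_nonneg _, ?_⟩
      simp
    · rintro c ⟨φ, hb, hl, rfl⟩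
      obtain ⟨h1, h2⟩ := part1 t ht φ hb hl
      exact le_trans h1 h2
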